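/- arXiv:2508.11615 — 2 statements merged into one kernel-verified Lean document; each statement's English description precedes it below -/
import Mathlib

section
/- Let C be a monoidal category whose unit 𝟙_C is an initial object, and suppose the identity functor of C admits a unital magma structure (μ, η). Then for objects A, B, the cospan A —ι₁→ A ⊗ B ←ι₂— B, where ι₁ := (ρ_A).inv ≫ (A ◁ η_B) and ι₂ := (λ_B).inv ≫ (η_A ▷ B), is a binary coproduct of A and B if and only if ((ρ_A).inv ⊗ (λ_B).inv) ≫ ((A ◁ η_B) ⊗ (η_A ▷ B)) ≫ μ_{A⊗B} = 𝟙_{A⊗B}. -/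
open CategoryTheory CategoryTheory.Limits CategoryTheory.MonoidalCategory

/-- A unital magma structure on the identity functor of a monoidal category: natural
families `μ_A : A ⊗ A ⟶ A` and `η_A : 𝟙_C ⟶ A` satisfying the two unit laws. -/
structure IdMagma (C : Type*) [Category C] [MonoidalCategory C] where
  μ : ∀ A : C, A ⊗ A ⟶ A
  η : ∀ A : C, 𝟙_ C ⟶ A
  μ_natural : ∀ {A B : C} (f : A ⟶ B), (f ⊗ₘ f) ≫ μ B = μ A ≫ f
  η_natural : ∀ {A B : C} (f : A ⟶ B), η A ≫ f = η B
  left_unit : ∀ A : C, (λ_ A).inv ≫ (η A ▷ A) ≫ μ A = 𝟙 A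
  right_unit : ∀ A : C, (ρ_ A).inv ≫ (A ◁ η A) ≫ μ A = 𝟙 A

lemma IdMagma.key1 {C : Type*} [Category C] [MonoidalCategory C] (m : IdMagma C)
    {A B X : C} (f : A ⟶ X) (g : B ⟶ X) :
    (ρ_ A).inv ≫ (A ◁ m.η B) ≫ (f ⊗ₘ g) ≫ m.μ X = f := by
  rw [MonoidalCategory.tensorHom_def]
  have h1 : (A ◁ m.η B) ≫ (f ▷ B) = (f ▷ 𝟙_ C) ≫ (X ◁ m.η B) :=
    (whisker_exchange f (m.η B))
  calc (ρ_ A).inv ≫ (A ◁ m.η B) ≫ ((f ▷ B) ≫ (X ◁ g)) ≫ m.μ X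
      = (ρ_ A).inv ≫ (f ▷ 𝟙_ C) ≫ (X ◁ (m.η B ≫ g)) ≫ m.μ X := by
        simp only [MonoidalCategory.whiskerLeft_comp, ← Category.assoc, h1]
    _ = f ≫ (ρ_ X).inv ≫ (X ◁ m.η X) ≫ m.μ X := by
        rw [m.η_natural g]
        simp only [← Category.assoc]
        congr 2
        simpa using (rightUnitor_inv_naturality f)
    _ = f := by rw [m.right_unit, Category.comp_id]

lemma IdMagma.key2 {C : Type*} [Category C] [MonoidalCategory C] (m : IdMagma C)
    {A B X : C} (f : A ⟶ X) (g : B ⟶ X) :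
    (λ_ B).inv ≫ (m.η A ▷ B) ≫ (f ⊗ₘ g) ≫ m.μ X = g := by
  rw [tensorHom_def']
  have h1 : (m.η A ▷ B) ≫ (A ◁ g) = (𝟙_ C ◁ g) ≫ (m.η A ▷ X) :=
    (whisker_exchange (m.η A) g).symm
  calc (λ_ B).inv ≫ (m.η A ▷ B) ≫ ((A ◁ g) ≫ (f ▷ X)) ≫ m.μ X
      = (λ_ B).inv ≫ (𝟙_ C ◁ g) ≫ ((m.η A ≫ f) ▷ X) ≫ m.μ X := by
        simp only [MonoidalCategory.comp_whiskerRight, ← Category.assoc, h1]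
    _ = g ≫ (λ_ X).inv ≫ (m.η X ▷ X) ≫ m.μ X := by
        rw [m.η_natural f]
        simp only [← Category.assoc]
        congr 2
        simpa using (leftUnitor_inv_naturality g)
    _ = g := by rw [m.left_unit, Category.comp_id]

/-- In a monoidal category with initial unit and a unital magma structure on the identity
functor, the canonical cospan on `A ⊗ B` is a binary coproduct iff the canonical
endomorphism of `A ⊗ B` is the identity. -/
theorem coproduct_iff_idempotent_eq_id {C : Type*} [Category C] [MonoidalCategory C]
    (hI : IsInitial (𝟙_ C)) (m : IdMagma C) (A B : C) :
    Nonempty (IsColimit (BinaryCofan.mk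
        ((ρ_ A).inv ≫ (A ◁ m.η B)) ((λ_ B).inv ≫ (m.η A ▷ B)))) ↔
    ((ρ_ A).inv ⊗ₘ (λ_ B).inv) ≫ ((A ◁ m.η B) ⊗ₘ (m.η A ▷ B)) ≫ m.μ (A ⊗ B) = 𝟙 (A ⊗ B) := by
  set ι₁ : A ⟶ A ⊗ B := (ρ_ A).inv ≫ (A ◁ m.η B) with hι₁
  set ι₂ : B ⟶ A ⊗ B := (λ_ B).inv ≫ (m.η A ▷ B) with hι₂
  have he : ((ρ_ A).inv ⊗ₘ (λ_ B).inv) ≫ ((A ◁ m.η B) ⊗ₘ (m.η A ▷ B)) ≫ m.μ (A ⊗ B)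
      = (ι₁ ⊗ₘ ι₂) ≫ m.μ (A ⊗ B) := by
    rw [hι₁, hι₂, ← tensorHom_comp_tensorHom, Category.assoc]
  constructor
  · rintro ⟨h⟩
    rw [he]
    apply h.hom_ext
    rintro ⟨⟨⟩⟩
    · exact (Category.assoc _ _ _).trans ((m.key1 ι₁ ι₂).trans (Category.comp_id ι₁).symm)
    · exact (Category.assoc _ _ _).trans ((m.key2 ι₁ ι₂).trans (Category.comp_id ι₂).symm)
  · intro hid
    rw [he] at hid
    refine ⟨BinaryCofan.IsColimit.mk _
      (fun f g => (f ⊗ₘ g) ≫ m.μ _)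
      (fun f g => by rw [BinaryCofan.mk_inl]; exact (Category.assoc _ _ _).trans (m.key1 f g))
      (fun f g => by rw [BinaryCofan.mk_inr]; exact (Category.assoc _ _ _).trans (m.key2 f g))
      (fun f g h h1 h2 => ?_)⟩
    simp only [BinaryCofan.mk_inl, BinaryCofan.mk_inr] at h1 h2
    rw [← h1, ← h2]
    show h = ((ι₁ ≫ h) ⊗ₘ (ι₂ ≫ h)) ≫ m.μ _
    erw [← tensorHom_comp_tensorHom_assoc, m.μ_natural h]
    change h = (ι₁ ⊗ₘ ι₂) ≫ m.μ (A ⊗ B) ≫ h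
    exact (Category.id_comp h).symm.trans ((congrArg (fun k => k ≫ h) hid.symm).trans (Category.assoc _ _ _))
end

section
/- Main theorem, (c) ⇒ (a): Let C be a symmetric monoidal category with braiding σ, and suppose the identity functor of C admits a unital magma structure (μ, η) such that for all objects A, B: tensorμ(A, A, B, B) ≫ μ_{A⊗B} = μ_A ⊗ μ_B. Then C is cocartesian: 𝟙_C is an initial object, and for all A, B the cospan A —ι₁→ A ⊗ B ←ι₂— B, with ι₁ := (ρ_A).inv ≫ (A ◁ η_B) and ι₂ := (λ_B).inv ≫ (η_A ▷ B), is a binary coproduct of A and B. -/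
open CategoryTheory CategoryTheory.Limits CategoryTheory.MonoidalCategory

section Aux
variable {C : Type*} [Category C] [MonoidalCategory C]

lemma IdMagma.eta_unit (m : IdMagma C) : m.η (𝟙_ C) = 𝟙 (𝟙_ C) := by
  have h1 : m.η (𝟙_ C) ≫ ((ρ_ (𝟙_ C)).inv ≫ m.μ (𝟙_ C)) = 𝟙 (𝟙_ C) := by
    have := m.left_unit (𝟙_ C)
    rw [MonoidalCategory.whiskerRight_id, unitors_inv_equal] at this
    simpa using this
  have h2 := m.η_natural ((ρ_ (𝟙_ C)).inv ≫ m.μ (𝟙_ C))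
  rw [h1] at h2
  exact h2.symm

lemma IdMagma.inl_desc (m : IdMagma C) {A B Z : C} (f : A ⟶ Z) (g : B ⟶ Z) :
    ((ρ_ A).inv ≫ (A ◁ m.η B)) ≫ (f ⊗ₘ g) ≫ m.μ Z = f := by
  rw [← id_tensorHom, Category.assoc, tensorHom_comp_tensorHom_assoc, Category.id_comp, m.η_natural, MonoidalCategory.tensorHom_def, Category.assoc,
    ← rightUnitor_inv_naturality_assoc, m.right_unit, Category.comp_id]

lemma IdMagma.inr_desc (m : IdMagma C) {A B Z : C} (f : A ⟶ Z) (g : B ⟶ Z) :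
    ((λ_ B).inv ≫ (m.η A ▷ B)) ≫ (f ⊗ₘ g) ≫ m.μ Z = g := by
  rw [← tensorHom_id, Category.assoc, tensorHom_comp_tensorHom_assoc, Category.id_comp, m.η_natural, MonoidalCategory.tensorHom_def', Category.assoc,
    ← leftUnitor_inv_naturality_assoc, m.left_unit, Category.comp_id]

lemma tensorμ_unit_unit [SymmetricCategory C] (A B : C) :
    tensorμ A (𝟙_ C) (𝟙_ C) B = 𝟙 _ := by
  rw [tensorμ, braiding_tensorUnit_left]
  monoidal

lemma IdMagma.key [SymmetricCategory C] (m : IdMagma C)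
    (h : ∀ A B : C, tensorμ A A B B ≫ m.μ (A ⊗ B) = m.μ A ⊗ₘ m.μ B) (A B : C) :
    (((ρ_ A).inv ≫ (A ◁ m.η B)) ⊗ₘ ((λ_ B).inv ≫ (m.η A ▷ B))) ≫ m.μ (A ⊗ B)
      = 𝟙 (A ⊗ B) := by
  have nat := tensorμ_natural (𝟙 A) (m.η A) (m.η B) (𝟙 B)
  rw [tensorμ_unit_unit, Category.id_comp] at nat
  calc (((ρ_ A).inv ≫ (A ◁ m.η B)) ⊗ₘ ((λ_ B).inv ≫ (m.η A ▷ B))) ≫ m.μ (A ⊗ B)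
      = ((ρ_ A).inv ⊗ₘ (λ_ B).inv) ≫ ((𝟙 A ⊗ₘ m.η B) ⊗ₘ (m.η A ⊗ₘ 𝟙 B)) ≫ m.μ (A ⊗ B) := by
        rw [← tensorHom_comp_tensorHom, id_tensorHom, tensorHom_id, Category.assoc]
    _ = ((ρ_ A).inv ⊗ₘ (λ_ B).inv) ≫ ((𝟙 A ⊗ₘ m.η A) ⊗ₘ (m.η B ⊗ₘ 𝟙 B)) ≫
          tensorμ A A B B ≫ m.μ (A ⊗ B) := by rw [← nat]; simp only [Category.assoc]
    _ = ((ρ_ A).inv ⊗ₘ (λ_ B).inv) ≫ ((𝟙 A ⊗ₘ m.η A) ⊗ₘ (m.η B ⊗ₘ 𝟙 B)) ≫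
          (m.μ A ⊗ₘ m.μ B) := by rw [h A B]
    _ = ((ρ_ A).inv ≫ (𝟙 A ⊗ₘ m.η A) ≫ m.μ A) ⊗ₘ ((λ_ B).inv ≫ (m.η B ⊗ₘ 𝟙 B) ≫ m.μ B) := by
        simp only [tensorHom_comp_tensorHom]
    _ = 𝟙 A ⊗ₘ 𝟙 B := by
        rw [id_tensorHom, tensorHom_id, m.right_unit, m.left_unit]
    _ = 𝟙 (A ⊗ B) := by simp
end Aux

/-- Main theorem, (c) ⇒ (a): a symmetric monoidal category whose identity functor admits
a unital magma structure compatible with the braiding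
(`tensorμ A A B B ≫ μ_{A⊗B} = μ_A ⊗ μ_B`) is cocartesian: the unit is initial and the
canonical cospans are binary coproducts. -/
theorem cocartesian_of_symmetry_condition {C : Type*} [Category C] [MonoidalCategory C]
    [SymmetricCategory C] (m : IdMagma C)
    (h : ∀ A B : C, tensorμ A A B B ≫ m.μ (A ⊗ B) = m.μ A ⊗ₘ m.μ B) :
    Nonempty (IsInitial (𝟙_ C)) ∧
    (∀ A B : C, Nonempty (IsColimit (BinaryCofan.mk
        ((ρ_ A).inv ≫ (A ◁ m.η B)) ((λ_ B).inv ≫ (m.η A ▷ B))))) := by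
  constructor
  · exact ⟨IsInitial.ofUniqueHom (fun X => m.η X) (fun Y f => by
      have := m.η_natural f
      rw [m.eta_unit, Category.id_comp] at this
      simpa using this)⟩
  · intro A B
    refine ⟨BinaryCofan.IsColimit.mk _ (fun f g => (f ⊗ₘ g) ≫ m.μ _) ?_ ?_ ?_⟩
    · intro T f g
      exact m.inl_desc f g
    · intro T f g
      exact m.inr_desc f g
    · intro T f g d hl hr
      dsimp only [BinaryCofan.mk_pt, BinaryCofan.mk_inl, BinaryCofan.mk_inr] at d hl hr
      change A ⊗ B ⟶ T at d
      have base := m.key h A B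
      calc d = (((( ρ_ A).inv ≫ (A ◁ m.η B)) ⊗ₘ ((λ_ B).inv ≫ (m.η A ▷ B))) ≫
            m.μ (A ⊗ B)) ≫ d := by rw [base, Category.id_comp]
        _ = ((((ρ_ A).inv ≫ (A ◁ m.η B)) ⊗ₘ ((λ_ B).inv ≫ (m.η A ▷ B))) ≫ (d ⊗ₘ d)) ≫
            m.μ T := by rw [Category.assoc, ← m.μ_natural d]; simp only [Category.assoc]
        _ = (f ⊗ₘ g) ≫ m.μ T := by
            rw [tensorHom_comp_tensorHom]
            exact congrArg (fun x => x ≫ m.μ T) (congrArg₂ (fun x y => x ⊗ₘ y) hl hr)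
end
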